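/- For every m ≥ 3 and every n with 2 ≤ n ≤ ⌊m/3⌋ + 2, the complete bipartite graph K_{n,m} is proportionally k-choosable for every k ≥ Δ(K_{n,m}) + 1 = m + 1. -/

import Mathlib

open Finset SimpleGraph



/-- `L` is a `k`-assignment: every vertex gets a list (finset) of exactly `k` colors. -/
def IsKAssignment {V : Type*} (L : V → Finset ℕ) (k : ℕ) : Prop :=
  ∀ v, (L v).card = k

/-- The multiplicity `η_L(c)`: the number of vertices whose list contains `c`. -/
def mult {V : Type*} [Fintype V] (L : V → Finset ℕ) (c : ℕ) : ℕ :=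
  (Finset.univ.filter (fun v => c ∈ L v)).card

/-- The palette of a list assignment: the union of all the lists. -/
def palette {V : Type*} [Fintype V] (L : V → Finset ℕ) : Finset ℕ :=
  Finset.univ.biUnion L

/-- A proper `L`-coloring: each vertex is colored from its list, and adjacent
vertices get different colors. -/
def IsProperListColoring {V : Type*} (G : SimpleGraph V) (L : V → Finset ℕ)
    (f : V → ℕ) : Prop :=
  (∀ v, f v ∈ L v) ∧ ∀ ⦃u w⦄, G.Adj u w → f u ≠ f w

/-- A proportional `L`-coloring: a proper `L`-coloring such that each color `c` in
the palette is used `⌊η(c)/k⌋` or `⌈η(c)/k⌉` times. -/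
def IsProportionalColoring {V : Type*} [Fintype V] (G : SimpleGraph V)
    (L : V → Finset ℕ) (k : ℕ) (f : V → ℕ) : Prop :=
  IsProperListColoring G L f ∧
    ∀ c ∈ palette L,
      (Finset.univ.filter (fun v => f v = c)).card = mult L c / k ∨
      (Finset.univ.filter (fun v => f v = c)).card = (mult L c + k - 1) / k

/-- `G` is proportionally `k`-choosable. -/
def ProportionallyChoosable {V : Type*} [Fintype V] (G : SimpleGraph V) (k : ℕ) : Prop :=
  ∀ L : V → Finset ℕ, IsKAssignment L k → ∃ f, IsProportionalColoring G L k f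

/-- The proportional choice number `χ_pc(G)`. -/
noncomputable def propChoiceNumber {V : Type*} [Fintype V] (G : SimpleGraph V) : ℕ :=
  sInf {k | ProportionallyChoosable G k}

/-- An equitable `k`-coloring exists: a proper coloring with `k` (possibly empty)
color classes whose sizes pairwise differ by at most one. -/
def EquitablyColorable {V : Type*} [Fintype V] (G : SimpleGraph V) (k : ℕ) : Prop :=
  ∃ f : V → Fin k, (∀ ⦃u w⦄, G.Adj u w → f u ≠ f w) ∧
    ∀ c c' : Fin k,
      (Finset.univ.filter (fun v => f v = c)).card ≤
        (Finset.univ.filter (fun v => f v = c')).card + 1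

/-- The complete bipartite graph `K_{n,m}`. -/
abbrev KBip (n m : ℕ) : SimpleGraph (Fin n ⊕ Fin m) :=
  completeBipartiteGraph (Fin n) (Fin m)


namespace Stmt18Aux

set_option linter.unusedSectionVars false

open Relation

variable {V : Type*} [Fintype V] [DecidableEq V]

/-- number of vertices colored `c` -/
def cnt (g : V → ℕ) (c : ℕ) : ℕ := (Finset.univ.filter (fun v => g v = c)).card

/-- capacity of a color -/
def capc (k : ℕ) (L : V → Finset ℕ) (c : ℕ) : ℕ := if k + 1 ≤ mult L c then 2 else 1

def Ov (k : ℕ) (L : V → Finset ℕ) (g : V → ℕ) : ℕ :=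
  ∑ c ∈ palette L, (cnt g c - capc k L c)

def Uv (k : ℕ) (L : V → Finset ℕ) (g : V → ℕ) : ℕ :=
  ((palette L).filter (fun c => k ≤ mult L c ∧ cnt g c = 0)).card

def mixedc (side : V → Bool) (g : V → ℕ) (c : ℕ) : Prop :=
  ∃ v w : V, side v ≠ side w ∧ g v = c ∧ g w = c

instance (side : V → Bool) (g : V → ℕ) (c : ℕ) : Decidable (mixedc side g c) := by
  unfold mixedc; infer_instance

def Mv (side : V → Bool) (L : V → Finset ℕ) (g : V → ℕ) : ℕ :=
  ((palette L).filter (mixedc side g)).card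

def Phi (k : ℕ) (side : V → Bool) (L : V → Finset ℕ) (g : V → ℕ) : ℕ :=
  (Fintype.card V + 1)^2 * Ov k L g + (Fintype.card V + 1) * Uv k L g + Mv side L g

/-- the step relation on colors -/
def stp (L : V → Finset ℕ) (g : V → ℕ) (d d' : ℕ) : Prop := ∃ v, g v = d ∧ d' ∈ L v


section cntlemmas

variable (g : V → ℕ) (v : V) (e d : ℕ)

lemma cnt_update_new (h : g v ≠ e) : cnt (Function.update g v e) e = cnt g e + 1 := by
  unfold cnt
  have hset : (Finset.univ.filter (fun x => Function.update g v e x = e)) =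
      insert v (Finset.univ.filter (fun x => g x = e)) := by
    ext x
    rcases eq_or_ne x v with rfl | hx
    · simp
    · simp [Function.update_of_ne hx, hx]
  rw [hset, Finset.card_insert_of_notMem (by simp [h])]

lemma cnt_update_old (h : g v ≠ e) : cnt (Function.update g v e) (g v) + 1 = cnt g (g v) := by
  unfold cnt
  have hset : (Finset.univ.filter (fun x => Function.update g v e x = g v)) =
      (Finset.univ.filter (fun x => g x = g v)).erase v := by
    ext x
    rcases eq_or_ne x v with rfl | hx
    · simp [Ne.symm h]
    · simp [Function.update_of_ne hx, hx]
  have hv : v ∈ Finset.univ.filter (fun x => g x = g v) := by simp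
  rw [hset, Finset.card_erase_of_mem hv]
  have : 0 < (Finset.univ.filter (fun x => g x = g v)).card := Finset.card_pos.mpr ⟨v, hv⟩
  omega

lemma cnt_update_other (h1 : d ≠ e) (h2 : g v ≠ d) :
    cnt (Function.update g v e) d = cnt g d := by
  unfold cnt
  congr 1
  ext x
  rcases eq_or_ne x v with rfl | hx
  · simp [Ne.symm h1, h2]
  · simp [Function.update_of_ne hx]

end cntlemmas

private lemma chain_suffix {α : Type*} {r : α → α → Prop} :
    ∀ (l : List α) (x : α), List.Chain r x l → ∀ y ∈ l, ∃ t : List α,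
      List.Chain r y t ∧ t.length < l.length ∧
      (y :: t).getLast (by simp) = (x :: l).getLast (by simp) := by
  intro l
  induction l with
  | nil => intro x _ y hy; simp at hy
  | cons z l ih =>
    intro x hch y hy
    rw [List.Chain, List.chain_cons] at hch
    rcases List.mem_cons.mp hy with rfl | hy'
    · exact ⟨l, hch.2, by simp, (List.getLast_cons (by simp)).symm⟩
    · obtain ⟨t, h1, h2, h3⟩ := ih z hch.2 y hy'
      exact ⟨t, h1, by simp; omega, by rw [h3]; exact (List.getLast_cons (by simp)).symm⟩

private lemma chain_transfer {α : Type*} {r r' : α → α → Prop} {a : α} :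
    ∀ (l : List α) (x : α), List.Chain r x l → (∀ p q, r p q → p ≠ a → r' p q) →
      x ≠ a → a ∉ l → List.Chain r' x l := by
  intro l
  induction l with
  | nil => intros; exact List.Chain.nil
  | cons z l ih =>
    intro x hch himp hx ha
    rw [List.Chain, List.chain_cons] at hch ⊢
    simp only [List.mem_cons, not_or] at ha
    exact ⟨himp _ _ hch.1 hx, ih z hch.2 himp (fun h => ha.1 h.symm) ha.2⟩

private lemma aug_aux (L : V → Finset ℕ) :
    ∀ (Nb : ℕ) (g : V → ℕ), (∀ v, g v ∈ L v) → ∀ (a b : ℕ) (l : List ℕ),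
      List.Chain (stp L g) a l → (a :: l).getLast (by simp) = b → a ≠ b → l.length ≤ Nb →
      ∃ g' : V → ℕ, (∀ v, g' v ∈ L v) ∧ cnt g' a + 1 = cnt g a ∧
        cnt g' b = cnt g b + 1 ∧ ∀ e, e ≠ a → e ≠ b → cnt g' e = cnt g e := by
  intro Nb
  induction Nb with
  | zero =>
    intro g hg a b l hch hlast hab hlen
    have : l = [] := List.length_eq_zero_iff.mp (Nat.le_zero.mp hlen)
    subst this
    simp at hlast
    exact absurd hlast hab
  | succ Nb ih =>
    intro g hg a b l hch hlast hab hlen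
    match l, hch, hlast, hlen with
    | [], _, hlast, _ =>
      simp at hlast
      exact absurd hlast hab
    | a₁ :: l', hch, hlast, hlen =>
      have hchfull := hch
      rw [List.Chain, List.chain_cons] at hch
      obtain ⟨⟨v, hv1, hv2⟩, hch'⟩ := hch
      by_cases hmem : a ∈ a₁ :: l'
      · obtain ⟨t, hcht, hlt, hlast'⟩ := chain_suffix (a₁ :: l') a hchfull a hmem
        refine ih g hg a b t hcht ?_ hab ?_
        · rw [hlast']; exact hlast
        · simp at hlt hlen; omega
      · have ha₁ : a ≠ a₁ := fun h => hmem (h ▸ List.mem_cons_self)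
        have hva₁ : g v ≠ a₁ := by rw [hv1]; exact ha₁
        set g₁ := Function.update g v a₁ with hg₁def
        have hg₁ : ∀ u, g₁ u ∈ L u := by
          intro u
          rcases eq_or_ne u v with rfl | hu
          · simpa [hg₁def] using hv2
          · simpa [hg₁def, Function.update_of_ne hu] using hg u
        have hcnt_a : cnt g₁ a + 1 = cnt g a := by
          have := cnt_update_old g v a₁ hva₁
          rwa [hv1] at this
        have hcnt_a₁ : cnt g₁ a₁ = cnt g a₁ + 1 := cnt_update_new g v a₁ hva₁
        have hcnt_other : ∀ e, e ≠ a → e ≠ a₁ → cnt g₁ e = cnt g e := by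
          intro e he1 he2
          exact cnt_update_other g v a₁ e he2 (by rw [hv1]; exact Ne.symm he1)
        by_cases hb : a₁ = b
        · subst hb
          exact ⟨g₁, hg₁, hcnt_a, hcnt_a₁, hcnt_other⟩
        · have hch₁ : List.Chain (stp L g₁) a₁ l' := by
            refine chain_transfer l' a₁ hch' ?_ ha₁.symm ?_
            · rintro p q ⟨u, hu1, hu2⟩ hpa
              refine ⟨u, ?_, hu2⟩
              have huv : u ≠ v := by
                intro h; subst h; rw [hu1] at hv1; exact hpa hv1
              rw [hg₁def, Function.update_of_ne huv]; exact hu1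
            · intro hal'
              exact hmem (List.mem_cons_of_mem _ hal')
          have hlast₁ : (a₁ :: l').getLast (by simp) = b := by
            rw [← hlast]; exact (List.getLast_cons (by simp)).symm
          obtain ⟨g₂, hg₂, h2a₁, h2b, h2o⟩ :=
            ih g₁ hg₁ a₁ b l' hch₁ hlast₁ hb (by simp at hlen ⊢; omega)
          refine ⟨g₂, hg₂, ?_, ?_, ?_⟩
          · rw [h2o a ha₁ hab]; exact hcnt_a
          · rw [h2b, hcnt_other b (Ne.symm hab) (Ne.symm hb)]
          · intro e he1 he2
            by_cases hea₁ : e = a₁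
            · subst hea₁; omega
            · rw [h2o e hea₁ he2, hcnt_other e he1 hea₁]

/-- augmenting along a chain -/
lemma aug (L : V → Finset ℕ) (g : V → ℕ) (hg : ∀ v, g v ∈ L v) {a b : ℕ}
    (h : Relation.ReflTransGen (stp L g) a b) (hab : a ≠ b) :
    ∃ g' : V → ℕ, (∀ v, g' v ∈ L v) ∧ cnt g' a + 1 = cnt g a ∧
      cnt g' b = cnt g b + 1 ∧ ∀ e, e ≠ a → e ≠ b → cnt g' e = cnt g e := by
  obtain ⟨l, hl, hlast⟩ := List.exists_isChain_cons_of_relationReflTransGen h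
  exact aug_aux L l.length g hg a b l hl hlast hab le_rfl

/-- total count over palette is the number of vertices -/
lemma sum_cnt (L : V → Finset ℕ) (g : V → ℕ) (hg : ∀ v, g v ∈ L v) :
    ∑ c ∈ palette L, cnt g c = Fintype.card V := by
  rw [← Finset.card_univ]
  exact (Finset.card_eq_sum_card_fiberwise
    (fun x _ => Finset.mem_biUnion.mpr ⟨x, Finset.mem_univ x, hg x⟩)).symm

/-- double counting: sum of multiplicities over a set of colors -/
lemma sum_mult (L : V → Finset ℕ) (K : Finset ℕ) :
    ∑ d ∈ K, mult L d = ∑ v : V, (K.filter (fun d => d ∈ L v)).card := by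
  unfold mult
  simp_rw [Finset.card_filter]
  exact Finset.sum_comm

/-- number of vertices whose color lies in K -/
lemma card_users (g : V → ℕ) (K : Finset ℕ) :
    (Finset.univ.filter (fun v => g v ∈ K)).card = ∑ d ∈ K, cnt g d := by
  rw [Finset.card_eq_sum_card_fiberwise (f := g) (s := Finset.univ.filter (fun v => g v ∈ K)) (t := K)
    (fun x hx => (Finset.mem_filter.mp (Finset.mem_coe.mp hx)).2)]
  refine Finset.sum_congr rfl fun d hd => ?_
  unfold cnt
  congr 1
  ext x
  simp only [Finset.mem_filter, Finset.mem_univ, true_and]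
  constructor
  · rintro ⟨_, h⟩; exact h
  · intro h; exact ⟨h ▸ hd, h⟩

lemma mult_le_card (L : V → Finset ℕ) (c : ℕ) : mult L c ≤ Fintype.card V := by
  rw [← Finset.card_univ]; exact Finset.card_filter_le _ _

lemma one_le_mult (L : V → Finset ℕ) {c : ℕ} (hc : c ∈ palette L) : 1 ≤ mult L c := by
  obtain ⟨v, _, hv⟩ := Finset.mem_biUnion.mp hc
  exact Finset.card_pos.mpr ⟨v, by simp [hv]⟩

lemma sum_mult_palette (k : ℕ) (L : V → Finset ℕ) (hcard : ∀ v, (L v).card = k) :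
    ∑ c ∈ palette L, mult L c = Fintype.card V * k := by
  rw [sum_mult]
  have hfil : ∀ v : V, ((palette L).filter (fun d => d ∈ L v)).card = k := by
    intro v
    have : (palette L).filter (fun d => d ∈ L v) = L v := by
      ext d
      simp only [Finset.mem_filter, palette, Finset.mem_biUnion, Finset.mem_univ, true_and]
      exact ⟨fun h => h.2, fun h => ⟨⟨v, h⟩, h⟩⟩
    rw [this, hcard v]
  rw [Finset.sum_congr rfl (fun v _ => hfil v), Finset.sum_const, smul_eq_mul, Finset.card_univ]

lemma Uv_le (k : ℕ) (L : V → Finset ℕ) (g : V → ℕ) (hk : 1 ≤ k)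
    (hcard : ∀ v, (L v).card = k) : Uv k L g ≤ Fintype.card V := by
  have h1 : Uv k L g ≤ ((palette L).filter (fun c => k ≤ mult L c)).card := by
    apply Finset.card_le_card
    intro c hc
    simp only [Finset.mem_filter, Uv] at hc ⊢
    exact ⟨hc.1, hc.2.1⟩
  have h2 : ((palette L).filter (fun c => k ≤ mult L c)).card * k ≤
      ∑ c ∈ (palette L).filter (fun c => k ≤ mult L c), mult L c := by
    rw [Finset.card_eq_sum_ones, Finset.sum_mul, one_mul]
    exact Finset.sum_le_sum fun c hc => (Finset.mem_filter.mp hc).2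
  have h3 : ∑ c ∈ (palette L).filter (fun c => k ≤ mult L c), mult L c ≤
      ∑ c ∈ palette L, mult L c :=
    Finset.sum_le_sum_of_subset (Finset.filter_subset _ _)
  have h4 := sum_mult_palette k L hcard
  have : ((palette L).filter (fun c => k ≤ mult L c)).card * k ≤ Fintype.card V * k := by
    omega
  have := Nat.le_of_mul_le_mul_right this hk
  omega

lemma Mv_le (side : V → Bool) (L : V → Finset ℕ) (g : V → ℕ) (hg : ∀ v, g v ∈ L v) :
    Mv side L g ≤ Fintype.card V := by
  have h1 : Mv side L g ≤ ∑ c ∈ (palette L).filter (mixedc side g), cnt g c := by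
    rw [Mv, Finset.card_eq_sum_ones]
    refine Finset.sum_le_sum fun c hc => ?_
    obtain ⟨v, w, _, hv, _⟩ := (Finset.mem_filter.mp hc).2
    exact Finset.card_pos.mpr ⟨v, by simp [hv]⟩
  have h2 : ∑ c ∈ (palette L).filter (mixedc side g), cnt g c ≤ ∑ c ∈ palette L, cnt g c :=
    Finset.sum_le_sum_of_subset (Finset.filter_subset _ _)
  rw [sum_cnt L g hg] at h2
  omega


section charlemmas

variable (side : V → Bool) (g g' : V → ℕ) (d e : ℕ) (a b : V)

lemma cnt_zero_iff : cnt g d = 0 ↔ ∀ x, g x ≠ d := by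
  unfold cnt
  rw [Finset.card_eq_zero, Finset.filter_eq_empty_iff]
  simp

lemma cnt_one_unique (h : cnt g d = 1) {x y : V} (hx : g x = d) (hy : g y = d) : x = y := by
  obtain ⟨z, hz⟩ := Finset.card_eq_one.mp h
  have h1 : x ∈ Finset.univ.filter (fun v => g v = d) := by simp [hx]
  have h2 : y ∈ Finset.univ.filter (fun v => g v = d) := by simp [hy]
  rw [hz, Finset.mem_singleton] at h1 h2
  rw [h1, h2]

lemma fiber_eq_pair (h : cnt g d = 2) (hu : g a = d) (hw : g b = d) (hab : a ≠ b) :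
    ∀ x, g x = d ↔ x = a ∨ x = b := by
  have hsub : ({a, b} : Finset V) ⊆ Finset.univ.filter (fun v => g v = d) := by
    intro x hx
    rcases Finset.mem_insert.mp hx with rfl | hx
    · simp [hu]
    · rw [Finset.mem_singleton] at hx; subst hx; simp [hw]
  have hcard : (Finset.univ.filter (fun v => g v = d)).card ≤ ({a, b} : Finset V).card := by
    rw [Finset.card_insert_of_notMem (by simp [hab]), Finset.card_singleton]
    unfold cnt at h; omega
  have := Finset.eq_of_subset_of_card_le hsub hcard
  intro x
  constructor
  · intro hx
    have : x ∈ ({a, b} : Finset V) := by rw [this]; simp [hx]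
    simpa using this
  · rintro (rfl | rfl) <;> assumption

lemma cnt_of_char_pair (h : ∀ x, g x = e ↔ x = a ∨ x = b) (hab : a ≠ b) : cnt g e = 2 := by
  unfold cnt
  have : Finset.univ.filter (fun v => g v = e) = {a, b} := by
    ext x; simp [h x]
  rw [this, Finset.card_insert_of_notMem (by simp [hab]), Finset.card_singleton]

lemma cnt_of_char_one (h : ∀ x, g x = e ↔ x = a) : cnt g e = 1 := by
  unfold cnt
  have : Finset.univ.filter (fun v => g v = e) = {a} := by
    ext x; simp [h x]
  rw [this, Finset.card_singleton]

lemma not_mixed_of_char_one (h : ∀ x, g x = e ↔ x = a) : ¬ mixedc side g e := by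
  rintro ⟨v, w, hvw, hv, hw⟩
  rw [h v] at hv; rw [h w] at hw
  subst hv; subst hw; exact hvw rfl

lemma not_mixed_of_char_pair (h : ∀ x, g x = e ↔ x = a ∨ x = b)
    (hs : side a = side b) : ¬ mixedc side g e := by
  rintro ⟨v, w, hvw, hv, hw⟩
  rw [h v] at hv; rw [h w] at hw
  rcases hv with rfl | rfl <;> rcases hw with rfl | rfl <;>
    first | exact hvw rfl | (exact hvw hs) | (exact hvw hs.symm)

lemma cnt_congr (h : ∀ x, g' x = e ↔ g x = e) : cnt g' e = cnt g e := by
  unfold cnt; congr 1; ext x; simpa using h x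

lemma mixed_congr (h : ∀ x, g' x = e ↔ g x = e) :
    mixedc side g' e ↔ mixedc side g e := by
  unfold mixedc
  constructor
  · rintro ⟨v, w, h1, h2, h3⟩; exact ⟨v, w, h1, (h v).mp h2, (h w).mp h3⟩
  · rintro ⟨v, w, h1, h2, h3⟩; exact ⟨v, w, h1, (h v).mpr h2, (h w).mpr h3⟩

end charlemmas

/-- THE MAIN COMBINATORIAL LEMMA -/
theorem main (k : ℕ) (side : V → Bool) (L : V → Finset ℕ)
    (hk1 : 1 ≤ k) (hcard : ∀ v, (L v).card = k)
    (hN2k : Fintype.card V + 1 ≤ 2 * k)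
    (h2N3k : 2 * Fintype.card V ≤ 3 * k) :
    ∃ g : V → ℕ, (∀ v, g v ∈ L v) ∧ (∀ c, cnt g c ≤ capc k L c) ∧
      (∀ c, k ≤ mult L c → 1 ≤ cnt g c) ∧ ∀ c, ¬ mixedc side g c := by
  classical
  have hSne : (Fintype.piFinset L).Nonempty := by
    refine ⟨fun v => (L v).min' (Finset.card_pos.mp (by rw [hcard v]; omega)), ?_⟩
    rw [Fintype.mem_piFinset]
    intro v
    exact (L v).min'_mem _
  obtain ⟨g, hgS, hminS⟩ := Finset.exists_min_image (Fintype.piFinset L) (Phi k side L) hSne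
  have hg : ∀ v, g v ∈ L v := Fintype.mem_piFinset.mp hgS
  have hmin : ∀ g' : V → ℕ, (∀ v, g' v ∈ L v) → Phi k side L g ≤ Phi k side L g' :=
    fun g' h => hminS g' (Fintype.mem_piFinset.mpr h)
  have hpal : ∀ v, g v ∈ palette L :=
    fun v => Finset.mem_biUnion.mpr ⟨v, Finset.mem_univ v, hg v⟩
  have hpalL : ∀ v, L v ⊆ palette L := by
    intro v d hd
    exact Finset.mem_biUnion.mpr ⟨v, Finset.mem_univ v, hd⟩
  have hcap1 : ∀ e, 1 ≤ capc k L e := by intro e; unfold capc; split <;> omega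
  have hcap2 : ∀ e, capc k L e ≤ 2 := by intro e; unfold capc; split <;> omega
  have hmultN : ∀ e, mult L e ≤ Fintype.card V := fun e => mult_le_card L e
  have hcnt_pal : ∀ e, cnt g e ≠ 0 → e ∈ palette L := by
    intro e he
    rcases Finset.card_pos.mp (Nat.pos_of_ne_zero he) with ⟨v, hv⟩
    have := (Finset.mem_filter.mp hv).2
    exact this ▸ hpal v
  have hmem_pal_of_mult : ∀ e, 1 ≤ mult L e → e ∈ palette L := by
    intro e he
    obtain ⟨v, hv⟩ := Finset.card_pos.mp he
    exact Finset.mem_biUnion.mpr ⟨v, Finset.mem_univ _, (Finset.mem_filter.mp hv).2⟩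
  -- STAGE 1 : no color above capacity
  have hO : Ov k L g = 0 := by
    by_contra hO0
    obtain ⟨c, hcp, hcgt⟩ : ∃ c ∈ palette L, capc k L c < cnt g c := by
      by_contra hall
      push_neg at hall
      apply hO0
      apply Finset.sum_eq_zero
      intro e he
      have := hall e he
      omega
    set K := (palette L).filter (fun d => Relation.ReflTransGen (stp L g) c d) with hK
    have hcK : c ∈ K := Finset.mem_filter.mpr ⟨hcp, Relation.ReflTransGen.refl⟩
    have hclosed : ∀ v, g v ∈ K → L v ⊆ K := by
      intro v hv d hd
      refine Finset.mem_filter.mpr ⟨hpalL v hd, ?_⟩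
      exact Relation.ReflTransGen.tail (Finset.mem_filter.mp hv).2 ⟨v, rfl, hd⟩
    by_cases hesc : ∃ d ∈ K, cnt g d < capc k L d
    · obtain ⟨d, hdK, hdlt⟩ := hesc
      have hdc : c ≠ d := by
        intro h; subst h; omega
      obtain ⟨g', hg', ha, hb, ho⟩ := aug L g hg (Finset.mem_filter.mp hdK).2 hdc
      have hOlt : Ov k L g' < Ov k L g := by
        apply Finset.sum_lt_sum
        · intro e he
          by_cases h1 : e = c
          · subst h1; omega
          by_cases h2 : e = d
          · subst h2; omega
          · rw [ho e h1 h2]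
        · refine ⟨c, hcp, ?_⟩
          omega
      have h1 := Uv_le k L g' hk1 hcard
      have h2 := Mv_le side L g' hg'
      have h3 : Phi k side L g' < Phi k side L g := by
        unfold Phi
        set N := Fintype.card V
        have hsq : (N+1)^2 = (N+1)*(N+1) := sq (N+1)
        have e1 : (N+1)^2 * Ov k L g' + (N+1)^2 ≤ (N+1)^2 * Ov k L g := by
          calc (N+1)^2 * Ov k L g' + (N+1)^2 = (N+1)^2 * (Ov k L g' + 1) := by ring
            _ ≤ (N+1)^2 * Ov k L g := Nat.mul_le_mul_left _ (by omega)
        have e2 : (N+1) * Uv k L g' + Mv side L g' < (N+1)^2 := by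
          have e3 : (N+1) * Uv k L g' ≤ (N+1) * N := Nat.mul_le_mul_left _ h1
          have e4 : (N+1)*N + N + 1 = (N+1)*(N+1) := by ring
          omega
        omega
      exact absurd (hmin g' hg') (not_le.mpr h3)
    · push_neg at hesc
      have key1 : k * (∑ d ∈ K, cnt g d) ≤ ∑ d ∈ K, mult L d := by
        rw [sum_mult L K]
        have hpt : ∀ v ∈ Finset.univ.filter (fun v => g v ∈ K),
            (K.filter (fun d => d ∈ L v)).card = k := by
          intro v hv
          have hsub : L v ⊆ K := hclosed v (Finset.mem_filter.mp hv).2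
          have hKf : K.filter (fun d => d ∈ L v) = L v := by
            ext d
            simp only [Finset.mem_filter]
            exact ⟨fun h => h.2, fun h => ⟨hsub h, h⟩⟩
          rw [hKf, hcard]
        calc k * (∑ d ∈ K, cnt g d)
            = (∑ d ∈ K, cnt g d) * k := Nat.mul_comm _ _
          _ = (Finset.univ.filter (fun v => g v ∈ K)).card * k := by rw [card_users]
          _ = ∑ v ∈ Finset.univ.filter (fun v => g v ∈ K), k := by
              rw [Finset.sum_const, smul_eq_mul]
          _ = ∑ v ∈ Finset.univ.filter (fun v => g v ∈ K),
                (K.filter (fun d => d ∈ L v)).card := (Finset.sum_congr rfl hpt).symm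
          _ ≤ ∑ v : V, (K.filter (fun d => d ∈ L v)).card :=
              Finset.sum_le_sum_of_subset (Finset.filter_subset _ _)
      have key2 : ∑ d ∈ K, capc k L d < ∑ d ∈ K, cnt g d := by
        apply Finset.sum_lt_sum
        · intro e he
          exact hesc e he
        · exact ⟨c, hcK, hcgt⟩
      have key3 : ∑ d ∈ K, mult L d ≤ (k-1) * (∑ d ∈ K, capc k L d) + K.card := by
        calc ∑ d ∈ K, mult L d ≤ ∑ d ∈ K, ((k-1) * capc k L d + 1) := by
              apply Finset.sum_le_sum
              intro e _
              by_cases hA : k + 1 ≤ mult L e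
              · have h5 := hmultN e
                simp only [capc, if_pos hA]
                omega
              · simp only [capc, if_neg hA]
                omega
          _ = (k-1) * (∑ d ∈ K, capc k L d) + K.card := by
              rw [Finset.sum_add_distrib, ← Finset.mul_sum, Finset.sum_const, smul_eq_mul, mul_one]
      have key4 : K.card ≤ ∑ d ∈ K, capc k L d := by
        calc K.card = ∑ _d ∈ K, 1 := Finset.card_eq_sum_ones K
        _ ≤ _ := Finset.sum_le_sum (fun e _ => hcap1 e)
      set X := ∑ d ∈ K, capc k L d with hX
      set Y := ∑ d ∈ K, cnt g d with hY
      have c1 : k * (X+1) ≤ k * Y := Nat.mul_le_mul_left k (by omega)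
      have c2 : k * Y ≤ (k-1) * X + X := le_trans key1 (by omega)
      have c3 : (k-1) * X + X = k * X := by
        have h9 : k - 1 + 1 = k := by omega
        calc (k-1)*X + X = ((k-1)+1) * X := by ring
          _ = k * X := by rw [h9]
      have c4 : k * (X + 1) = k * X + k := by ring
      rw [c4] at c1
      rw [c3] at c2
      omega
  have hcaps : ∀ e ∈ palette L, cnt g e ≤ capc k L e := by
    intro e he
    have := (Finset.sum_eq_zero_iff.mp hO) e he
    omega
  have hcapsall : ∀ e, cnt g e ≤ capc k L e := by
    intro e
    by_cases he : e ∈ palette L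
    · exact hcaps e he
    · have h0 : cnt g e = 0 := by
        by_contra h
        exact he (hcnt_pal e h)
      rw [h0]
      exact Nat.zero_le _
  -- STAGE 2 : every color of multiplicity ≥ k is used
  have hU : Uv k L g = 0 := by
    by_contra hU0
    obtain ⟨c₀, hc₀⟩ := Finset.card_pos.mp (Nat.pos_of_ne_zero hU0)
    obtain ⟨hc₀p, hc₀m, hc₀z⟩ : c₀ ∈ palette L ∧ k ≤ mult L c₀ ∧ cnt g c₀ = 0 := by
      have := Finset.mem_filter.mp hc₀
      exact ⟨this.1, this.2.1, this.2.2⟩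
    set K := (palette L).filter (fun d => Relation.ReflTransGen (stp L g) d c₀) with hK
    have hcK : c₀ ∈ K := Finset.mem_filter.mpr ⟨hc₀p, Relation.ReflTransGen.refl⟩
    have hclosed : ∀ v d, d ∈ L v → d ∈ K → g v ∈ K := by
      intro v d hd hdK
      refine Finset.mem_filter.mpr ⟨hpal v, ?_⟩
      exact Relation.ReflTransGen.head ⟨v, rfl, hd⟩ (Finset.mem_filter.mp hdK).2
    by_cases hesc : ∃ d ∈ K, 2 ≤ cnt g d ∨ (cnt g d = 1 ∧ mult L d < k)
    · obtain ⟨d, hdK, hdsl⟩ := hesc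
      have hdc : d ≠ c₀ := by
        intro h; subst h; omega
      obtain ⟨g', hg', ha, hb, ho⟩ := aug L g hg (Finset.mem_filter.mp hdK).2 hdc
      have hO' : Ov k L g' = 0 := by
        apply Finset.sum_eq_zero
        intro e he
        have hce := hcaps e he
        have h1 := hcap1 e
        by_cases h2 : e = d
        · subst h2; omega
        by_cases h3 : e = c₀
        · subst h3; omega
        · rw [ho e h2 h3]; omega
      have hUlt : Uv k L g' < Uv k L g := by
        have hsub : (palette L).filter (fun c => k ≤ mult L c ∧ cnt g' c = 0) ⊆
            ((palette L).filter (fun c => k ≤ mult L c ∧ cnt g c = 0)).erase c₀ := by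
          intro e he
          obtain ⟨hep, hem, hez⟩ : e ∈ palette L ∧ k ≤ mult L e ∧ cnt g' e = 0 := by
            have := Finset.mem_filter.mp he
            exact ⟨this.1, this.2.1, this.2.2⟩
          have hec₀ : e ≠ c₀ := by
            intro h; subst h; omega
          refine Finset.mem_erase.mpr ⟨hec₀, Finset.mem_filter.mpr ⟨hep, hem, ?_⟩⟩
          by_cases hed : e = d
          · subst hed
            rcases hdsl with h5 | h5 <;> omega
          · rw [← ho e hed hec₀]; exact hez
        calc Uv k L g' ≤ (((palette L).filter (fun c => k ≤ mult L c ∧ cnt g c = 0)).erase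
              c₀).card := Finset.card_le_card hsub
          _ < Uv k L g := by
              rw [Finset.card_erase_of_mem hc₀]
              have h7 : 0 < Uv k L g := Nat.pos_of_ne_zero hU0
              unfold Uv at h7 ⊢
              omega
      have h2 := Mv_le side L g' hg'
      have h3 : Phi k side L g' < Phi k side L g := by
        unfold Phi
        set N := Fintype.card V
        rw [hO']
        have e3 : (N+1) * Uv k L g' + (N+1) ≤ (N+1) * Uv k L g :=
          calc (N+1) * Uv k L g' + (N+1) = (N+1) * (Uv k L g' + 1) := by ring
            _ ≤ (N+1) * Uv k L g := Nat.mul_le_mul_left _ (by omega)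
        omega
      exact absurd (hmin g' hg') (not_le.mpr h3)
    · push_neg at hesc
      have hblock : ∀ d ∈ K, cnt g d ≤ 1 ∧ (cnt g d = 1 → k ≤ mult L d) := by
        intro d hd
        have h := hesc d hd
        refine ⟨by omega, fun h1 => ?_⟩
        have h2 := h.2 h1
        omega
      have key1 : ∑ d ∈ K, mult L d ≤ k * ∑ d ∈ K, cnt g d := by
        rw [sum_mult L K]
        have hpt : ∀ v : V, (K.filter (fun d => d ∈ L v)).card ≤
            if g v ∈ K then k else 0 := by
          intro v
          split
          · calc (K.filter (fun d => d ∈ L v)).card ≤ (L v).card := by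
                  apply Finset.card_le_card
                  intro d hd
                  exact (Finset.mem_filter.mp hd).2
              _ = k := hcard v
          · rename_i hgv
            have hemp : K.filter (fun d => d ∈ L v) = ∅ := by
              rw [Finset.filter_eq_empty_iff]
              intro d hd hdv
              exact hgv (hclosed v d hdv hd)
            rw [hemp]
            exact le_refl 0
        calc ∑ v : V, (K.filter (fun d => d ∈ L v)).card
            ≤ ∑ v : V, (if g v ∈ K then k else 0) := Finset.sum_le_sum (fun v _ => hpt v)
          _ = ∑ v ∈ Finset.univ.filter (fun v => g v ∈ K), k := (Finset.sum_filter _ _).symm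
          _ = (Finset.univ.filter (fun v => g v ∈ K)).card * k := by
              rw [Finset.sum_const, smul_eq_mul]
          _ = (∑ d ∈ K, cnt g d) * k := by rw [card_users]
          _ = k * ∑ d ∈ K, cnt g d := Nat.mul_comm _ _
      have key2 : k * (∑ d ∈ K, cnt g d) + k ≤ ∑ d ∈ K, mult L d := by
        have hpt : ∀ d ∈ K, k * cnt g d + (if d = c₀ then k else 0) ≤ mult L d := by
          intro d hd
          have hb := hblock d hd
          by_cases h1 : d = c₀
          · subst h1
            rw [if_pos rfl, hc₀z, Nat.mul_zero]
            omega
          · rw [if_neg h1]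
            rcases Nat.lt_or_ge (cnt g d) 1 with h2 | h2
            · have h3 : cnt g d = 0 := by omega
              rw [h3, Nat.mul_zero]
              omega
            · have h3 : cnt g d = 1 := by omega
              rw [h3, Nat.mul_one]
              have := hb.2 h3
              omega
        calc k * (∑ d ∈ K, cnt g d) + k
            = ∑ d ∈ K, k * cnt g d + ∑ d ∈ K, (if d = c₀ then k else 0) := by
              rw [Finset.mul_sum, Finset.sum_ite_eq' K c₀ (fun _ => k), if_pos hcK]
          _ = ∑ d ∈ K, (k * cnt g d + (if d = c₀ then k else 0)) :=
              Finset.sum_add_distrib.symm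
          _ ≤ ∑ d ∈ K, mult L d := Finset.sum_le_sum hpt
      omega
  have hreqs : ∀ e, k ≤ mult L e → 1 ≤ cnt g e := by
    intro e he
    have hep : e ∈ palette L := hmem_pal_of_mult e (le_trans hk1 he)
    by_contra h
    have h0 : cnt g e = 0 := by omega
    have hmem : e ∈ (palette L).filter (fun c => k ≤ mult L c ∧ cnt g c = 0) :=
      Finset.mem_filter.mpr ⟨hep, he, h0⟩
    rw [Uv, Finset.card_eq_zero] at hU
    rw [hU] at hmem
    exact absurd hmem (Finset.notMem_empty e)
  -- STAGE 3 : no mixed color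
  have hM : Mv side L g = 0 := by
    by_contra hM0
    obtain ⟨c, hcmem⟩ := Finset.card_pos.mp (Nat.pos_of_ne_zero hM0)
    have hcp : c ∈ palette L := (Finset.mem_filter.mp hcmem).1
    obtain ⟨u, w, hsuw, hu, hw⟩ := (Finset.mem_filter.mp hcmem).2
    have huw : u ≠ w := fun h => hsuw (h ▸ rfl)
    have hcnt2 : cnt g c = 2 := by
      have hle := hcaps c hcp
      have h2 : 2 ≤ cnt g c := by
        have hsub : ({u, w} : Finset V) ⊆ Finset.univ.filter (fun v => g v = c) := by
          intro x hx
          rcases Finset.mem_insert.mp hx with rfl | hx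
          · simp [hu]
          · rw [Finset.mem_singleton] at hx; subst hx; simp [hw]
        calc 2 = ({u, w} : Finset V).card := by
              rw [Finset.card_insert_of_notMem (by simp [huw]), Finset.card_singleton]
          _ ≤ _ := Finset.card_le_card hsub
      have := hcap2 c
      omega
    have hA : k + 1 ≤ mult L c := by
      by_contra h
      have h1 : capc k L c = 1 := by unfold capc; rw [if_neg h]
      have := hcaps c hcp
      omega
    have hfib : ∀ x, g x = c ↔ x = u ∨ x = w := fiber_eq_pair g c u w hcnt2 hu hw huw
    have hfib' : ∀ x, g x = c ↔ x = w ∨ x = u := by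
      intro x; rw [hfib x]; exact or_comm
    have move_contra : ∀ g' : V → ℕ, (∀ v, g' v ∈ L v) →
        (∀ e ∈ palette L, cnt g' e ≤ capc k L e) →
        (∀ e ∈ palette L, k ≤ mult L e → 1 ≤ cnt g' e) →
        (∀ e ∈ palette L, mixedc side g' e → mixedc side g e ∧ e ≠ c) → False := by
      intro g' hg' hcaps' hreqs' hmix'
      have hO' : Ov k L g' = 0 := Finset.sum_eq_zero (fun e he => by have := hcaps' e he; omega)
      have hU' : Uv k L g' = 0 := by
        rw [Uv, Finset.card_eq_zero, Finset.filter_eq_empty_iff]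
        rintro e he ⟨h1, h2⟩
        have := hreqs' e he h1
        omega
      have hMlt : Mv side L g' < Mv side L g := by
        have hsub : (palette L).filter (mixedc side g') ⊆
            ((palette L).filter (mixedc side g)).erase c := by
          intro e he
          have h1 := Finset.mem_filter.mp he
          have h2 := hmix' e h1.1 h1.2
          exact Finset.mem_erase.mpr ⟨h2.2, Finset.mem_filter.mpr ⟨h1.1, h2.1⟩⟩
        calc Mv side L g' ≤ (((palette L).filter (mixedc side g)).erase c).card :=
              Finset.card_le_card hsub
          _ < Mv side L g := by
              rw [Finset.card_erase_of_mem hcmem]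
              have : 0 < Mv side L g := Nat.pos_of_ne_zero hM0
              unfold Mv at this ⊢
              omega
      have hlt : Phi k side L g' < Phi k side L g := by
        unfold Phi
        rw [hO', hU', hO, hU]
        simp only [Nat.mul_zero, Nat.zero_add]
        exact hMlt
      exact absurd (hmin g' hg') (not_le.mpr hlt)
    have hsides : ∀ x : V, side x = side u ∨ side x = side w := by
      have hbool : ∀ a b x : Bool, a ≠ b → x = a ∨ x = b := by decide
      exact fun x => hbool (side u) (side w) (side x) hsuw
    have do_move : ∀ (g'' : V → ℕ) (d : ℕ), d ≠ c → (∀ v, g'' v ∈ L v) →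
        (1 ≤ cnt g'' c) → (cnt g'' c ≤ 2) → (cnt g'' d = 1) →
        (¬ mixedc side g'' c) → (¬ mixedc side g'' d) →
        (∀ e, e ≠ c → e ≠ d → ∀ z, g'' z = e ↔ g z = e) → False := by
      intro g'' d hdc hg'' hc1 hc2 hd1 hmc hmd hoth
      apply move_contra g'' hg''
      · intro e he
        by_cases h1 : e = c
        · have h3 : capc k L c = 2 := by unfold capc; rw [if_pos hA]
          rw [h1]
          omega
        by_cases h2 : e = d
        · rw [h2]
          have := hcap1 d
          omega
        · rw [cnt_congr g g'' e (hoth e h1 h2)]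
          exact hcaps e he
      · intro e he hm
        by_cases h1 : e = c
        · subst h1; omega
        by_cases h2 : e = d
        · subst h2; omega
        · rw [cnt_congr g g'' e (hoth e h1 h2)]
          exact hreqs e hm
      · intro e he hme
        by_cases h1 : e = c
        · subst h1; exact absurd hme hmc
        by_cases h2 : e = d
        · subst h2; exact absurd hme hmd
        · exact ⟨(mixed_congr side g g'' e (hoth e h1 h2)).mp hme, h1⟩
    -- blocked fact 1 : every color on the list of u or w is used
    have b1 : ∀ (x y : V), (∀ v, g v = c ↔ v = x ∨ v = y) → x ≠ y → side x ≠ side y →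
        ∀ d ∈ L x, 1 ≤ cnt g d := by
      intro x y hfibxy hxy _hsxy d hd
      by_contra h0
      have hd0 : cnt g d = 0 := by omega
      have hdc : d ≠ c := by
        intro h; subst h; omega
      have hnouser : ∀ z, g z ≠ d := (cnt_zero_iff g d).mp hd0
      have hgx : g x = c := (hfibxy x).mpr (Or.inl rfl)
      set g'' := Function.update g x d with hgdef
      have hg'' : ∀ v, g'' v ∈ L v := by
        intro v
        rcases eq_or_ne v x with rfl | hv
        · simpa [hgdef] using hd
        · simpa [hgdef, Function.update_of_ne hv] using hg v
      have hcharc : ∀ z, g'' z = c ↔ z = y := by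
        intro z
        rcases eq_or_ne z x with rfl | hz
        · rw [hgdef]
          simp only [Function.update_self]
          exact ⟨fun h => absurd h hdc, fun h => absurd h hxy⟩
        · rw [hgdef, Function.update_of_ne hz, hfibxy z]
          exact ⟨fun h => h.resolve_left hz, Or.inr⟩
      have hchard : ∀ z, g'' z = d ↔ z = x := by
        intro z
        rcases eq_or_ne z x with rfl | hz
        · rw [hgdef]; simp
        · rw [hgdef, Function.update_of_ne hz]
          exact ⟨fun h => absurd h (hnouser z), fun h => absurd h hz⟩
      have hoth : ∀ e, e ≠ c → e ≠ d → ∀ z, g'' z = e ↔ g z = e := by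
        intro e hec hed z
        rcases eq_or_ne z x with rfl | hz
        · rw [hgdef]
          simp only [Function.update_self]
          rw [hgx]
          constructor
          · intro h; exact absurd h.symm hed
          · intro h; exact absurd h.symm hec
        · rw [hgdef, Function.update_of_ne hz]
      exact do_move g'' d hdc hg''
        (cnt_of_char_one g'' c y hcharc).ge
        (by rw [cnt_of_char_one g'' c y hcharc]; omega)
        (cnt_of_char_one g'' d x hchard)
        (not_mixed_of_char_one side g'' c y hcharc)
        (not_mixed_of_char_one side g'' d x hchard)
        hoth
    -- blocked fact 3 (rotation): a singleton color on L w whose user is on u's side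
    -- cannot have c on that user's list
    have b3 : ∀ d ∈ L w, cnt g d = 1 → ∀ z, g z = d → side z = side u → c ∉ L z := by
      intro d hd hd1 z hz hsz hcz
      have hdc : d ≠ c := by
        intro h; rw [h] at hd1; omega
      have hzw : z ≠ w := by
        intro h; rw [h, hw] at hz; exact hdc hz.symm
      have hzu : z ≠ u := by
        intro h; rw [h, hu] at hz; exact hdc hz.symm
      have hzune : z ≠ u := hzu
      set g'' := Function.update (Function.update g w d) z c with hgdef
      have hg''w : g'' w = d := by
        rw [hgdef, Function.update_of_ne (Ne.symm hzw), Function.update_self]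
      have hg''z : g'' z = c := by rw [hgdef, Function.update_self]
      have hg''o : ∀ x, x ≠ z → x ≠ w → g'' x = g x := by
        intro x h1 h2
        rw [hgdef, Function.update_of_ne h1, Function.update_of_ne h2]
      have hg'' : ∀ v, g'' v ∈ L v := by
        intro v
        rcases eq_or_ne v z with rfl | h1
        · rw [hg''z]; exact hcz
        rcases eq_or_ne v w with rfl | h2
        · rw [hg''w]; exact hd
        · rw [hg''o v h1 h2]; exact hg v
      have huniq : ∀ x, g x = d → x = z := fun x hx => cnt_one_unique g d hd1 hx hz
      have hcharc : ∀ x, g'' x = c ↔ x = z ∨ x = u := by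
        intro x
        rcases eq_or_ne x z with rfl | h1
        · simp [hg''z]
        rcases eq_or_ne x w with rfl | h2
        · rw [hg''w]
          constructor
          · intro h; exact absurd h hdc
          · rintro (h | h); exact absurd h hzw.symm; exact absurd h huw.symm
        · rw [hg''o x h1 h2, hfib x]
          constructor
          · rintro (h | h); exact Or.inr h; exact absurd h h2
          · rintro (h | h); exact absurd h h1; exact Or.inl h
      have hchard : ∀ x, g'' x = d ↔ x = w := by
        intro x
        rcases eq_or_ne x z with rfl | h1
        · rw [hg''z]
          exact ⟨fun h => absurd h (Ne.symm hdc), fun h => absurd h hzw⟩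
        rcases eq_or_ne x w with rfl | h2
        · simp [hg''w]
        · rw [hg''o x h1 h2]
          exact ⟨fun h => absurd (huniq x h) h1, fun h => absurd h h2⟩
      have hoth : ∀ e, e ≠ c → e ≠ d → ∀ x, g'' x = e ↔ g x = e := by
        intro e hec hed x
        rcases eq_or_ne x z with rfl | h1
        · rw [hg''z, hz]
          exact ⟨fun h => absurd h.symm hec, fun h => absurd h.symm hed⟩
        rcases eq_or_ne x w with rfl | h2
        · rw [hg''w, hw]
          exact ⟨fun h => absurd h.symm hed, fun h => absurd h.symm hec⟩
        · rw [hg''o x h1 h2]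
      exact do_move g'' d hdc hg''
        (by rw [cnt_of_char_pair g'' c z u hcharc hzune]; omega)
        (by rw [cnt_of_char_pair g'' c z u hcharc hzune])
        (cnt_of_char_one g'' d w hchard)
        (not_mixed_of_char_pair side g'' c z u hcharc hsz)
        (not_mixed_of_char_one side g'' d w hchard)
        hoth
    -- blocked fact 2 (swap): a singleton color whose user is on w's side and has c
    -- on its list cannot lie on L u
    have b2 : ∀ d, cnt g d = 1 → ∀ y, g y = d → side y = side w → c ∈ L y → d ∉ L u := by
      intro d hd1 y hy hsy hcy hdu
      have hdc : d ≠ c := by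
        intro h; rw [h] at hd1; omega
      have hyu : y ≠ u := by
        intro h; rw [h, hu] at hy; exact hdc hy.symm
      have hyw : y ≠ w := by
        intro h; rw [h, hw] at hy; exact hdc hy.symm
      set g'' := Function.update (Function.update g u d) y c with hgdef
      have hg''u : g'' u = d := by
        rw [hgdef, Function.update_of_ne (Ne.symm hyu), Function.update_self]
      have hg''y : g'' y = c := by rw [hgdef, Function.update_self]
      have hg''o : ∀ x, x ≠ y → x ≠ u → g'' x = g x := by
        intro x h1 h2
        rw [hgdef, Function.update_of_ne h1, Function.update_of_ne h2]
      have hg'' : ∀ v, g'' v ∈ L v := by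
        intro v
        rcases eq_or_ne v y with rfl | h1
        · rw [hg''y]; exact hcy
        rcases eq_or_ne v u with rfl | h2
        · rw [hg''u]; exact hdu
        · rw [hg''o v h1 h2]; exact hg v
      have huniq : ∀ x, g x = d → x = y := fun x hx => cnt_one_unique g d hd1 hx hy
      have hcharc : ∀ x, g'' x = c ↔ x = y ∨ x = w := by
        intro x
        rcases eq_or_ne x y with rfl | h1
        · simp [hg''y]
        rcases eq_or_ne x u with rfl | h2
        · rw [hg''u]
          constructor
          · intro h; exact absurd h hdc
          · rintro (h | h); exact absurd h hyu.symm; exact absurd h huw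
        · rw [hg''o x h1 h2, hfib x]
          constructor
          · rintro (h | h); exact absurd h h2; exact Or.inr h
          · rintro (h | h); exact absurd h h1; exact Or.inr h
      have hchard : ∀ x, g'' x = d ↔ x = u := by
        intro x
        rcases eq_or_ne x y with rfl | h1
        · rw [hg''y]
          exact ⟨fun h => absurd h (Ne.symm hdc), fun h => absurd h hyu⟩
        rcases eq_or_ne x u with rfl | h2
        · simp [hg''u]
        · rw [hg''o x h1 h2]
          exact ⟨fun h => absurd (huniq x h) h1, fun h => absurd h h2⟩
      have hoth : ∀ e, e ≠ c → e ≠ d → ∀ x, g'' x = e ↔ g x = e := by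
        intro e hec hed x
        rcases eq_or_ne x y with rfl | h1
        · rw [hg''y, hy]
          exact ⟨fun h => absurd h.symm hec, fun h => absurd h.symm hed⟩
        rcases eq_or_ne x u with rfl | h2
        · rw [hg''u, hu]
          exact ⟨fun h => absurd h.symm hed, fun h => absurd h.symm hec⟩
        · rw [hg''o x h1 h2]
      exact do_move g'' d hdc hg''
        (by rw [cnt_of_char_pair g'' c y w hcharc hyw]; omega)
        (by rw [cnt_of_char_pair g'' c y w hcharc hyw])
        (cnt_of_char_one g'' d u hchard)
        (not_mixed_of_char_pair side g'' c y w hcharc hsy)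
        (not_mixed_of_char_one side g'' d u hchard)
        hoth
    -- ===== the counting contradiction =====
    have f_loww : ∀ d ∈ L w, 1 ≤ cnt g d := b1 w u hfib' (Ne.symm huw) (fun h => hsuw h.symm)
    have f_lowu : ∀ d ∈ L u, 1 ≤ cnt g d := b1 u w hfib huw hsuw
    set W2 := (L w).filter (fun d => cnt g d = 2) with hW2
    set QQ := (L w).filter (fun d => cnt g d = 1 ∧ ∃ y, g y = d ∧ side y = side w) with hQQ
    set ZZ := (L w).filter (fun d => cnt g d = 1 ∧ ∃ z, g z = d ∧ side z = side u) with hZZ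
    set GG := QQ.filter (fun d => ∃ y, g y = d ∧ side y = side w ∧ c ∈ L y) with hGG
    have hdisjQZ : Disjoint QQ ZZ := by
      rw [Finset.disjoint_left]
      intro d hdQ hdZ
      obtain ⟨hdw, h1, y, hy1, hy2⟩ := Finset.mem_filter.mp hdQ
      obtain ⟨-, h2, z, hz1, hz2⟩ := Finset.mem_filter.mp hdZ
      have hyz := cnt_one_unique g d h1 hy1 hz1
      rw [hyz] at hy2
      exact hsuw (hz2.symm.trans hy2)
    have hunion : (L w).filter (fun d => ¬ cnt g d = 2) = QQ ∪ ZZ := by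
      ext d
      simp only [Finset.mem_filter, Finset.mem_union, hQQ, hZZ]
      constructor
      · rintro ⟨hd, h2⟩
        have hlo := f_loww d hd
        have hhi : cnt g d ≤ 2 := le_trans (hcapsall d) (hcap2 d)
        have h1 : cnt g d = 1 := by omega
        obtain ⟨y, hy⟩ : ∃ y, g y = d := by
          have hpos : 0 < cnt g d := by omega
          obtain ⟨y, hy⟩ := Finset.card_pos.mp hpos
          exact ⟨y, (Finset.mem_filter.mp hy).2⟩
        rcases hsides y with h | h
        · right; exact ⟨hd, h1, y, hy, h⟩
        · left; exact ⟨hd, h1, y, hy, h⟩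
      · rintro (⟨hd, h1, -⟩ | ⟨hd, h1, -⟩) <;> exact ⟨hd, by omega⟩
    have hk_part : W2.card + (QQ.card + ZZ.card) = k := by
      have h1 := Finset.card_filter_add_card_filter_not
        (s := L w) (p := fun d => cnt g d = 2)
      rw [hunion, Finset.card_union_of_disjoint hdisjQZ, hcard w] at h1
      exact h1
    have hGGQQ : GG ⊆ QQ := Finset.filter_subset _ _
    have hGnotLu : ∀ d ∈ GG, d ∉ L u := by
      intro d hd
      obtain ⟨hdQ, y, hy1, hy2, hy3⟩ := Finset.mem_filter.mp hd
      obtain ⟨-, h1, -⟩ := Finset.mem_filter.mp hdQ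
      exact b2 d h1 y hy1 hy2 hy3
    -- the injection into vertices missing c
    have hmem_info : ∀ d ∈ (QQ \ GG) ∪ ZZ, cnt g d = 1 := by
      intro d hd
      rcases Finset.mem_union.mp hd with hd' | hd'
      · exact (Finset.mem_filter.mp (Finset.mem_sdiff.mp hd').1).2.1
      · exact (Finset.mem_filter.mp hd').2.1
    have husr_spec : ∀ d, (∃ x, g x = d) →
        g (if h : ∃ x, g x = d then h.choose else u) = d := by
      intro d h
      simp only [dif_pos h]
      exact h.choose_spec
    have hmissing : ((QQ \ GG) ∪ ZZ).card ≤
        (Finset.univ.filter (fun v : V => c ∉ L v)).card := by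
      apply Finset.card_le_card_of_injOn (fun d => if h : ∃ x, g x = d then h.choose else u)
      · intro d hd
        simp only [Finset.mem_coe, Finset.mem_filter, Finset.mem_univ, true_and] at hd ⊢
        rcases Finset.mem_union.mp hd with hd' | hd'
        · obtain ⟨hdQ, hdG⟩ := Finset.mem_sdiff.mp hd'
          obtain ⟨hdw, h1, y, hy1, hy2⟩ := Finset.mem_filter.mp hdQ
          have hex : ∃ x, g x = d := ⟨y, hy1⟩
          have hgusr := husr_spec d hex
          have heq : (if h : ∃ x, g x = d then h.choose else u) = y :=
            cnt_one_unique g d h1 hgusr hy1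
          rw [heq]
          intro hcy
          exact hdG (Finset.mem_filter.mpr ⟨hdQ, y, hy1, hy2, hcy⟩)
        · obtain ⟨hdw, h1, z, hz1, hz2⟩ := Finset.mem_filter.mp hd'
          have hex : ∃ x, g x = d := ⟨z, hz1⟩
          have hgusr := husr_spec d hex
          have heq : (if h : ∃ x, g x = d then h.choose else u) = z :=
            cnt_one_unique g d h1 hgusr hz1
          rw [heq]
          exact b3 d hdw h1 z hz1 hz2
      · intro d1 hd1 d2 hd2 heq
        have h1 := hmem_info d1 (Finset.mem_coe.mp hd1)
        have h2 := hmem_info d2 (Finset.mem_coe.mp hd2)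
        have e1 : ∃ x, g x = d1 := by
          have hpos : 0 < cnt g d1 := by omega
          obtain ⟨y, hy⟩ := Finset.card_pos.mp hpos
          exact ⟨y, (Finset.mem_filter.mp hy).2⟩
        have e2 : ∃ x, g x = d2 := by
          have hpos : 0 < cnt g d2 := by omega
          obtain ⟨y, hy⟩ := Finset.card_pos.mp hpos
          exact ⟨y, (Finset.mem_filter.mp hy).2⟩
        have s1 := husr_spec d1 e1
        have s2 := husr_spec d2 e2
        have heq' : (if h : ∃ x, g x = d1 then h.choose else u) =
            (if h : ∃ x, g x = d2 then h.choose else u) := heq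
        rw [heq'] at s1
        rw [s1] at s2
        exact s2
    have htarget : (Finset.univ.filter (fun v : V => c ∉ L v)).card =
        Fintype.card V - mult L c := by
      have h1 := Finset.card_filter_add_card_filter_not
        (s := (Finset.univ : Finset V)) (p := fun v => c ∈ L v)
      rw [Finset.card_univ] at h1
      have h2 : (Finset.univ.filter (fun v : V => c ∈ L v)).card = mult L c := rfl
      omega
    have hQZcard : (QQ \ GG).card + ZZ.card ≤ Fintype.card V - mult L c := by
      have hdisj4 : Disjoint (QQ \ GG) ZZ :=
        Finset.disjoint_of_subset_left (Finset.sdiff_subset) hdisjQZ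
      rw [← Finset.card_union_of_disjoint hdisj4, ← htarget]
      exact hmissing
    -- occupancy bound
    have hsum_lw : ∑ d ∈ L w, cnt g d = k + W2.card := by
      have hsplit := Finset.sum_filter_add_sum_filter_not (L w) (fun d => cnt g d = 2) (cnt g)
      have hW2sum : ∑ d ∈ W2, cnt g d = 2 * W2.card := by
        rw [Finset.sum_congr rfl (fun d hd => (Finset.mem_filter.mp hd).2),
          Finset.sum_const, smul_eq_mul, mul_comm]
      have hQZsum : ∑ d ∈ (L w).filter (fun d => ¬ cnt g d = 2), cnt g d =
          QQ.card + ZZ.card := by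
        rw [hunion]
        have hone : ∀ d ∈ QQ ∪ ZZ, cnt g d = 1 := by
          intro d hd
          rcases Finset.mem_union.mp hd with hd' | hd'
          · exact (Finset.mem_filter.mp hd').2.1
          · exact (Finset.mem_filter.mp hd').2.1
        rw [Finset.sum_congr rfl hone, Finset.sum_const, smul_eq_mul, mul_one,
          Finset.card_union_of_disjoint hdisjQZ]
      rw [← hsplit, hW2sum, hQZsum]
      omega
    have hinterGG : GG.card + (L u ∩ L w).card ≤ k := by
      have hdisj2 : Disjoint GG (L u ∩ L w) := by
        rw [Finset.disjoint_left]
        intro d hdG hdI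
        exact hGnotLu d hdG (Finset.mem_inter.mp hdI).1
      have hsubset : GG ∪ (L u ∩ L w) ⊆ L w := by
        intro d hd
        rcases Finset.mem_union.mp hd with hd' | hd'
        · exact Finset.filter_subset _ _ (hGGQQ hd')
        · exact (Finset.mem_inter.mp hd').2
      calc GG.card + (L u ∩ L w).card = (GG ∪ (L u ∩ L w)).card :=
            (Finset.card_union_of_disjoint hdisj2).symm
        _ ≤ (L w).card := Finset.card_le_card hsubset
        _ = k := hcard w
    have hLusdiff : (L u \ L w).card + (L u ∩ L w).card = k := by
      rw [← hcard u]
      exact Finset.card_sdiff_add_card_inter (L u) (L w)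
    have hbig : ∑ d ∈ L w, cnt g d + (L u \ L w).card ≤ Fintype.card V := by
      have hdisj3 : Disjoint (L w) (L u \ L w) := by
        rw [Finset.disjoint_left]
        intro d h1 h2
        exact (Finset.mem_sdiff.mp h2).2 h1
      have hsub4 : (L w) ∪ (L u \ L w) ⊆ palette L := by
        intro d hd
        rcases Finset.mem_union.mp hd with hd' | hd'
        · exact hpalL w hd'
        · exact hpalL u (Finset.mem_sdiff.mp hd').1
      have h5 : ∑ d ∈ (L w) ∪ (L u \ L w), cnt g d ≤ ∑ e ∈ palette L, cnt g e :=
        Finset.sum_le_sum_of_subset hsub4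
      rw [Finset.sum_union hdisj3, sum_cnt L g hg] at h5
      have h6 : (L u \ L w).card ≤ ∑ d ∈ L u \ L w, cnt g d := by
        rw [Finset.card_eq_sum_ones]
        exact Finset.sum_le_sum (fun d hd => f_lowu d (Finset.mem_sdiff.mp hd).1)
      omega
    have hGQQ : (QQ \ GG).card + GG.card = QQ.card :=
      Finset.card_sdiff_add_card_eq_card hGGQQ
    have hmultc := hmultN c
    omega

  refine ⟨g, hg, hcapsall, hreqs, ?_⟩
  intro e hme
  have hep : e ∈ palette L := by
    obtain ⟨v, w, _, hv, _⟩ := hme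
    exact hv ▸ hpal v
  have hmem : e ∈ (palette L).filter (mixedc side g) := Finset.mem_filter.mpr ⟨hep, hme⟩
  rw [Mv, Finset.card_eq_zero] at hM
  rw [hM] at hmem
  exact absurd hmem (Finset.notMem_empty e)

end Stmt18Aux

/-- For `m ≥ 3` and `2 ≤ n ≤ ⌊m/3⌋ + 2`, `K_{n,m}` is proportionally
`k`-choosable for every `k ≥ Δ(K_{n,m}) + 1 = m + 1`. -/
theorem stmt18 (n m : ℕ) (hm : 3 ≤ m) (hn : 2 ≤ n) (hnm : n ≤ m / 3 + 2) :
    ∀ k : ℕ, m + 1 ≤ k → ProportionallyChoosable (KBip n m) k := by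
  intro k hk L hL
  classical
  have hcardV : Fintype.card (Fin n ⊕ Fin m) = n + m := by simp
  have hdiv : 3 * (m / 3) ≤ m := by
    have := Nat.div_mul_le_self m 3
    omega
  have hN2k : Fintype.card (Fin n ⊕ Fin m) + 1 ≤ 2 * k := by rw [hcardV]; omega
  have h2N3k : 2 * Fintype.card (Fin n ⊕ Fin m) ≤ 3 * k := by rw [hcardV]; omega
  obtain ⟨g, hg, hcaps, hreqs, hmix⟩ := Stmt18Aux.main k (fun v => v.isRight) L
    (by omega) hL hN2k h2N3k
  refine ⟨g, ⟨hg, ?_⟩, ?_⟩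
  · intro x y hxy heq
    apply hmix (g x)
    refine ⟨x, y, ?_, rfl, heq.symm⟩
    rcases x with x | x <;> rcases y with y | y <;> simp_all [KBip, completeBipartiteGraph]
  · intro c hc
    have hmult1 : 1 ≤ mult L c := Stmt18Aux.one_le_mult L hc
    have hmultN : mult L c ≤ Fintype.card (Fin n ⊕ Fin m) := Stmt18Aux.mult_le_card L c
    have hcap := hcaps c
    have hcnt_eq : (Finset.univ.filter (fun v => g v = c)).card = Stmt18Aux.cnt g c := rfl
    rw [hcnt_eq]
    have he2k : mult L c + 1 ≤ 2 * k := by omega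
    by_cases hbig : k + 1 ≤ mult L c
    · have hc2 : Stmt18Aux.capc k L c = 2 := by
        unfold Stmt18Aux.capc; rw [if_pos hbig]
      have ht1 : 1 ≤ Stmt18Aux.cnt g c := hreqs c (by omega)
      have ht2 : Stmt18Aux.cnt g c ≤ 2 := by omega
      have hfl : mult L c / k = 1 :=
        Nat.div_eq_of_lt_le (by omega : 1 * k ≤ mult L c) (by omega : mult L c < (1+1) * k)
      have hcl : (mult L c + k - 1) / k = 2 :=
        Nat.div_eq_of_lt_le (by omega : 2 * k ≤ mult L c + k - 1)
          (by omega : mult L c + k - 1 < (2+1) * k)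
      rcases Nat.lt_or_ge (Stmt18Aux.cnt g c) 2 with h | h
      · left; omega
      · right; omega
    · have hc1 : Stmt18Aux.capc k L c = 1 := by
        unfold Stmt18Aux.capc; rw [if_neg hbig]
      have ht2 : Stmt18Aux.cnt g c ≤ 1 := by omega
      rcases Nat.lt_or_ge (mult L c) k with hlt | hge
      · have hfl : mult L c / k = 0 := Nat.div_eq_of_lt hlt
        have hcl : (mult L c + k - 1) / k = 1 :=
          Nat.div_eq_of_lt_le (by omega : 1 * k ≤ mult L c + k - 1)
            (by omega : mult L c + k - 1 < (1+1) * k)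
        rcases Nat.eq_zero_or_pos (Stmt18Aux.cnt g c) with h | h
        · left; omega
        · right; omega
      · have hek : mult L c = k := by omega
        have ht1 : 1 ≤ Stmt18Aux.cnt g c := hreqs c (by omega)
        left
        have hfl : mult L c / k = 1 := by
          rw [hek]; exact Nat.div_self (by omega)
        omega
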